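/- Let κ < 0, λ > 0 and let n ≥ 1 be an integer. If u is an S⁺ₙ-solution of problem (P) for parameters (κ, λ), then ‖u‖_∞ < 1/(2n√(−κ)), where ‖u‖_∞ = sup_{x ∈ [0,1]} |u(x)|. -/

import Mathlib

open Set Real Filter Topology

noncomputable section

/-- `u` is twice continuously differentiable on `[a,b]`, satisfies
`1 + κ (u')² > 0` and the ODE `-u'' = λ u (1 + κ (u')²)^(3/2)` on `[a,b]`. -/
def SolODE (κ lam : ℝ) (u : ℝ → ℝ) (a b : ℝ) : Prop :=
  (∀ x ∈ Set.Icc a b, DifferentiableAt ℝ u x) ∧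
  (∀ x ∈ Set.Icc a b, DifferentiableAt ℝ (deriv u) x) ∧
  ContinuousOn (deriv (deriv u)) (Set.Icc a b) ∧
  (∀ x ∈ Set.Icc a b, 0 < 1 + κ * (deriv u x) ^ 2) ∧
  (∀ x ∈ Set.Icc a b,
    -(deriv (deriv u) x) = lam * u x * (1 + κ * (deriv u x) ^ 2) ^ ((3 : ℝ) / 2))

/-- `u` is a solution of problem (P) on `[0,1]` with Dirichlet boundary conditions. -/
def SolP (κ lam : ℝ) (u : ℝ → ℝ) : Prop :=
  SolODE κ lam u 0 1 ∧ u 0 = 0 ∧ u 1 = 0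

/-- `u` is an `S⁺ₙ`-solution of problem (P): a nontrivial solution with exactly
`n - 1` zeros in `(0,1)`, all zeros in `[0,1]` simple, and positive near `0`. -/
def SPlus (κ lam : ℝ) (n : ℕ) (u : ℝ → ℝ) : Prop :=
  SolP κ lam u ∧
  (∃ x ∈ Set.Icc (0 : ℝ) 1, u x ≠ 0) ∧
  {x ∈ Set.Ioo (0 : ℝ) 1 | u x = 0}.ncard = n - 1 ∧
  (∀ τ ∈ Set.Icc (0 : ℝ) 1, u τ = 0 → deriv u τ ≠ 0) ∧
  (∃ δ > 0, ∀ x ∈ Set.Ioo (0 : ℝ) δ, 0 < u x)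

/-- The constant `B = ∫₀¹ dθ/√(θ⁻⁴ - 1)`. -/
def Bconst : ℝ := ∫ θ in (0 : ℝ)..1, 1 / Real.sqrt ((θ ^ 4)⁻¹ - 1)

/-- The sup-norm of `u` over `[0,1]`. -/
def supNorm (u : ℝ → ℝ) : ℝ := sSup ((fun x => |u x|) '' Set.Icc (0 : ℝ) 1)

/-- The time map `J(λ, ξ) = √(-κ) ∫₀¹ ξ/√(1 - (1 - λκξ²(1-θ²)/2)⁻²) dθ`. -/
def Jmap (κ lam ξ : ℝ) : ℝ :=
  Real.sqrt (-κ) *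
    ∫ θ in (0 : ℝ)..1,
      ξ / Real.sqrt (1 - ((1 - lam * κ / 2 * ξ ^ 2 * (1 - θ ^ 2))⁻¹) ^ 2)

theorem stmt14 (κ lam : ℝ) (hκ : κ < 0) (hlam : 0 < lam) (n : ℕ) (hn : 1 ≤ n)
    (u : ℝ → ℝ) (hu : SPlus κ lam n u) :
    supNorm u < 1 / (2 * n * Real.sqrt (-κ)) := by
  obtain ⟨⟨⟨hdu, hdu', hcont'', hpos, hode⟩, hu0, hu1⟩, -, hcard, hsimple, -⟩ := hu
  have hκ' : (0:ℝ) < -κ := by linarith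
  have hs : 0 < Real.sqrt (-κ) := Real.sqrt_pos.2 hκ'
  have hnR : (0:ℝ) < (n:ℝ) := by exact_mod_cast hn
  have hucont : ContinuousOn u (Icc (0:ℝ) 1) :=
    fun x hx => (hdu x hx).continuousAt.continuousWithinAt
  have hvcont : ContinuousOn (deriv u) (Icc (0:ℝ) 1) :=
    fun x hx => (hdu' x hx).continuousAt.continuousWithinAt
  -- Energy function
  set E : ℝ → ℝ := fun x =>
    (1 + κ * (deriv u x) ^ 2) ^ (-(2:ℝ)⁻¹) - κ * lam / 2 * (u x) ^ 2 with hEdef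
  have hEd : ∀ x ∈ Icc (0:ℝ) 1, HasDerivAt E 0 x := by
    intro x hx
    have h1 : HasDerivAt (deriv u) (deriv (deriv u) x) x := (hdu' x hx).hasDerivAt
    have hf : HasDerivAt (fun y => 1 + κ * (deriv u y) ^ 2)
        (κ * ((2:ℕ) * (deriv u x) ^ 1 * deriv (deriv u) x)) x := by
      exact ((h1.pow 2).const_mul κ).const_add 1
    have hfx : (0:ℝ) < 1 + κ * (deriv u x) ^ 2 := hpos x hx
    have hrp := hf.rpow_const (p := -(2:ℝ)⁻¹) (Or.inl (ne_of_gt hfx))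
    have hq : HasDerivAt (fun y => κ * lam / 2 * (u y) ^ 2)
        (κ * lam / 2 * ((2:ℕ) * (u x) ^ 1 * deriv u x)) x :=
      (((hdu x hx).hasDerivAt.pow 2).const_mul (κ * lam / 2))
    have hE' := hrp.sub hq
    have hw : deriv (deriv u) x
        = -(lam * u x * (1 + κ * (deriv u x) ^ 2) ^ ((3:ℝ)/2)) := by
      have := hode x hx; linarith
    have key : (1 + κ * (deriv u x) ^ 2) ^ (-(2:ℝ)⁻¹ - 1)
        * (1 + κ * (deriv u x) ^ 2) ^ ((3:ℝ)/2) = 1 := by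
      rw [← Real.rpow_add hfx]
      norm_num
    convert hE' using 1
    case e'_4 => rfl
    case e'_5 => rfl
    case e'_8 => rfl
    rw [hw]
    set A := (1 + κ * (deriv u x) ^ 2) ^ (-(2:ℝ)⁻¹ - 1)
    set B := (1 + κ * (deriv u x) ^ 2) ^ ((3:ℝ)/2)
    have : κ * ((2:ℕ) * deriv u x ^ 1 * -(lam * u x * B)) * -(2:ℝ)⁻¹ * A
        - κ * lam / 2 * ((2:ℕ) * u x ^ 1 * deriv u x)
        = κ * lam * u x * deriv u x * (A * B) - κ * lam * u x * deriv u x := by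
      push_cast; ring
    rw [this, key]
    ring
  have hEcont : ContinuousOn E (Icc (0:ℝ) 1) :=
    fun x hx => (hEd x hx).continuousAt.continuousWithinAt
  have hEconst : ∀ x ∈ Icc (0:ℝ) 1, E x = E 0 :=
    constant_of_has_deriv_right_zero hEcont
      (fun x hx => (hEd x (Ico_subset_Icc_self hx)).hasDerivWithinAt)
  -- critical values
  have hEcrit : ∀ c ∈ Icc (0:ℝ) 1, deriv u c = 0 →
      E c = 1 - κ * lam / 2 * (u c) ^ 2 := by
    intro c _ h0
    simp only [hEdef, h0]
    norm_num
  have hcritEq : ∀ c ∈ Icc (0:ℝ) 1, ∀ c' ∈ Icc (0:ℝ) 1,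
      deriv u c = 0 → deriv u c' = 0 → |u c| = |u c'| := by
    intro c hc c' hc' h0 h0'
    have e1 := hEcrit c hc h0
    have e2 := hEcrit c' hc' h0'
    have e3 : E c = E c' := by rw [hEconst c hc, hEconst c' hc']
    have hk : κ * lam / 2 ≠ 0 := by
      have : κ * lam < 0 := mul_neg_of_neg_of_pos hκ hlam
      intro h; rw [div_eq_zero_iff] at h; rcases h with h | h <;> linarith
    have : (u c) ^ 2 = (u c') ^ 2 := by
      have : κ * lam / 2 * (u c) ^ 2 = κ * lam / 2 * (u c') ^ 2 := by
        rw [e1, e2] at e3; linarith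
      exact mul_left_cancel₀ hk this
    rw [← Real.sqrt_sq_eq_abs, ← Real.sqrt_sq_eq_abs, this]
  -- Zero set
  set Z : Set ℝ := Icc (0:ℝ) 1 ∩ u ⁻¹' {0} with hZdef
  have hZ0 : (0:ℝ) ∈ Z := ⟨by simp, by simpa using hu0⟩
  have hZ1 : (1:ℝ) ∈ Z := ⟨by simp, by simpa using hu1⟩
  have hZsub : Z ⊆ Icc (0:ℝ) 1 := fun z hz => hz.1
  have hZu : ∀ z ∈ Z, u z = 0 := fun z hz => hz.2
  have hZclosed : IsClosed Z :=
    hucont.preimage_isClosed_of_isClosed isClosed_Icc isClosed_singleton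
  have hZcomp : IsCompact Z := isCompact_Icc.of_isClosed_subset hZclosed hZsub
  have hiso : ∀ z ∈ Z, ∀ᶠ y in 𝓝[≠] z, u y ≠ 0 := by
    intro z hz
    have hz' := hsimple z hz.1 hz.2
    have hslope :=
      (hasDerivAt_iff_tendsto_slope.1 (hdu z hz.1).hasDerivAt).eventually_ne hz'
    filter_upwards [hslope, self_mem_nhdsWithin] with y h1 h2 h0
    apply h1
    rw [slope_def_field, h0, hZu z hz]
    simp
  have hZdisc : DiscreteTopology Z := by
    rw [discreteTopology_subtype_iff]
    intro z hz
    rw [inf_principal_eq_bot]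
    filter_upwards [hiso z hz] with y hy
    intro hyZ
    exact hy (hZu y hyZ)
  have hZfin : Z.Finite := hZcomp.finite ⟨hZdisc⟩
  -- cardinality
  have hZeq : Z = insert 0 (insert 1 {x ∈ Set.Ioo (0:ℝ) 1 | u x = 0}) := by
    ext y
    constructor
    · rintro ⟨⟨hy0, hy1⟩, hyu⟩
      rcases eq_or_lt_of_le hy0 with h | h
      · exact Or.inl h.symm
      rcases eq_or_lt_of_le hy1 with h' | h'
      · exact Or.inr (Or.inl h')
      · exact Or.inr (Or.inr ⟨⟨h, h'⟩, hyu⟩)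
    · rintro (rfl | rfl | ⟨⟨h1, h2⟩, h3⟩)
      · exact hZ0
      · exact hZ1
      · exact ⟨⟨h1.le, h2.le⟩, h3⟩
  have hZi_fin : {x ∈ Set.Ioo (0:ℝ) 1 | u x = 0}.Finite := by
    apply hZfin.subset
    rw [hZeq]
    intro x hx; exact Or.inr (Or.inr hx)
  have h1i : (1:ℝ) ∉ {x ∈ Set.Ioo (0:ℝ) 1 | u x = 0} := by
    rintro ⟨⟨-, h⟩, -⟩; exact lt_irrefl 1 h
  have h01 : (0:ℝ) ∉ insert 1 {x ∈ Set.Ioo (0:ℝ) 1 | u x = 0} := by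
    rintro (h | ⟨⟨h, -⟩, -⟩)
    · exact one_ne_zero h.symm
    · exact lt_irrefl 0 h
  have hZcard : Z.ncard = n + 1 := by
    rw [hZeq, Set.ncard_insert_of_notMem h01 (hZi_fin.insert 1),
      Set.ncard_insert_of_notMem h1i hZi_fin, hcard]
    omega
  -- Finset enumeration
  set sZ : Finset ℝ := hZfin.toFinset with hsZdef
  have hsZmem : ∀ y, y ∈ sZ ↔ y ∈ Z := fun y => hZfin.mem_toFinset
  have hsZcard : sZ.card = n + 1 := by
    simp only [hsZdef]
    rw [← Set.ncard_eq_toFinset_card Z hZfin]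
    exact hZcard
  set e := sZ.orderIsoOfFin hsZcard with hedef
  set t : Fin (n+1) → ℝ := fun i => (e i : ℝ) with htdef
  have htmem : ∀ i, t i ∈ Z := fun i => (hsZmem _).1 (e i).2
  have htmono : StrictMono t := fun i j hij => e.strictMono hij
  have htsurj : ∀ z ∈ Z, ∃ j, t j = z := by
    intro z hz
    exact ⟨e.symm ⟨z, (hsZmem z).2 hz⟩, by simp [htdef]⟩
  have ht0 : t 0 = 0 := by
    obtain ⟨j, hj⟩ := htsurj 0 hZ0
    have h1 : t 0 ≤ t j := htmono.monotone (Fin.zero_le j)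
    have h2 : (0:ℝ) ≤ t 0 := (htmem 0).1.1
    rw [hj] at h1
    linarith
  have htlast : t (Fin.last n) = 1 := by
    obtain ⟨j, hj⟩ := htsurj 1 hZ1
    have h1 : t j ≤ t (Fin.last n) := htmono.monotone (Fin.le_last j)
    have h2 : t (Fin.last n) ≤ 1 := (htmem (Fin.last n)).1.2
    rw [hj] at h1
    linarith
  -- pigeonhole: short gap
  have hgap : ∃ i : ℕ, ∃ h : i < n,
      t ⟨i+1, by omega⟩ - t ⟨i, by omega⟩ ≤ 1 / n := by
    by_contra hcon
    push_neg at hcon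
    set g : ℕ → ℝ := fun i => t ⟨min i n, by omega⟩ with hgdef
    have hsum : ∑ i ∈ Finset.range n, (g (i+1) - g i) = 1 := by
      rw [Finset.sum_range_sub]
      have hg0 : g 0 = 0 := by
        simp only [hgdef, Nat.zero_min]
        exact ht0
      have hgn : g n = 1 := by
        simp only [hgdef, Nat.min_self]
        exact htlast
      rw [hg0, hgn]; ring
    have hlt : ∀ i ∈ Finset.range n, 1 / (n:ℝ) < g (i+1) - g i := by
      intro i hi
      rw [Finset.mem_range] at hi
      have := hcon i hi
      have e1 : g (i+1) = t ⟨i+1, by omega⟩ := by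
        simp only [hgdef]
        congr 1
        exact Fin.ext (by simp; omega)
      have e2 : g i = t ⟨i, by omega⟩ := by
        simp only [hgdef]
        congr 1
        exact Fin.ext (by simp; omega)
      rw [e1, e2]
      linarith
    have := Finset.sum_lt_sum_of_nonempty
      (Finset.nonempty_range_iff.2 (by omega)) hlt
    rw [hsum, Finset.sum_const, Finset.card_range, nsmul_eq_mul] at this
    rw [mul_one_div, div_self (ne_of_gt hnR)] at this
    exact lt_irrefl 1 this
  -- bump lemma
  have hbump : ∀ a b : ℝ, a ∈ Z → b ∈ Z → a < b →
      (∀ z ∈ Z, z ≤ a ∨ b ≤ z) →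
      ∃ c, a < c ∧ c < b ∧ deriv u c = 0 ∧ ∀ x, a ≤ x → x ≤ b → |u x| ≤ |u c| := by
    intro a b ha hb hab hgap'
    have hsub : Icc a b ⊆ Icc (0:ℝ) 1 :=
      Icc_subset_Icc ha.1.1 hb.1.2
    obtain ⟨c, hcmem, hcmax⟩ := isCompact_Icc.exists_isMaxOn
      (nonempty_Icc.2 hab.le) ((hucont.mono hsub).abs)
    have hm : (a+b)/2 ∈ Icc a b := ⟨by linarith, by linarith⟩
    have hmI : (a+b)/2 ∈ Icc (0:ℝ) 1 := hsub hm
    have hum : u ((a+b)/2) ≠ 0 := by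
      intro h0
      rcases hgap' ((a+b)/2) ⟨hmI, h0⟩ with h | h <;> linarith
    have hucpos : 0 < |u c| :=
      lt_of_lt_of_le (abs_pos.2 hum) (hcmax hm)
    have hca : c ≠ a := by
      intro h; rw [h, hZu a ha] at hucpos; simp at hucpos
    have hcb : c ≠ b := by
      intro h; rw [h, hZu b hb] at hucpos; simp at hucpos
    have hc1 : a < c := lt_of_le_of_ne hcmem.1 (Ne.symm hca)
    have hc2 : c < b := lt_of_le_of_ne hcmem.2 hcb
    have hnhds : Icc a b ∈ 𝓝 c := Icc_mem_nhds hc1 hc2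
    have hderiv0 : deriv u c = 0 := by
      rcases lt_or_gt_of_ne (fun h : u c = 0 => by
        rw [h] at hucpos; simp at hucpos) with hneg | hpos'
      · -- u c < 0 : local min
        apply IsLocalMin.deriv_eq_zero
        filter_upwards [hnhds] with x hx
        have := hcmax hx
        have h1 : |u x| ≤ |u c| := this
        have h2 : |u c| = -(u c) := abs_of_neg hneg
        have := neg_abs_le (u x)
        linarith
      · apply IsLocalMax.deriv_eq_zero
        filter_upwards [hnhds] with x hx
        have h1 : |u x| ≤ |u c| := hcmax hx
        have h2 : |u c| = u c := abs_of_pos hpos'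
        have := le_abs_self (u x)
        linarith
    exact ⟨c, hc1, hc2, hderiv0, fun x hx1 hx2 => hcmax ⟨hx1, hx2⟩⟩
  -- the bound K on |u'|
  obtain ⟨xK, hxK, hKmax⟩ := isCompact_Icc.exists_isMaxOn
    (nonempty_Icc.2 zero_le_one) hvcont.abs
  set K : ℝ := |deriv u xK| with hKdef
  have hK0 : 0 ≤ K := abs_nonneg _
  have hKbound : ∀ x ∈ Icc (0:ℝ) 1, |deriv u x| ≤ K := fun x hx => hKmax hx
  have hKlt : K * Real.sqrt (-κ) < 1 := by
    have h1 : (deriv u xK) ^ 2 * (-κ) < 1 := by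
      have := hpos xK hxK; nlinarith
    have h2 : (K * Real.sqrt (-κ)) ^ 2 < 1 := by
      rw [mul_pow, hKdef, sq_abs, Real.sq_sqrt hκ'.le]
      exact h1
    nlinarith [mul_nonneg hK0 hs.le]
  -- extract short bump
  obtain ⟨i, hi, hshort⟩ := hgap
  set a := t ⟨i, by omega⟩ with hadef
  set b := t ⟨i+1, by omega⟩ with hbdef
  have haZ : a ∈ Z := htmem _
  have hbZ : b ∈ Z := htmem _
  have hab : a < b := htmono (by simp [Fin.lt_def])
  have hgap0 : ∀ z ∈ Z, z ≤ a ∨ b ≤ z := by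
    intro z hz
    obtain ⟨j, hj⟩ := htsurj z hz
    rcases le_or_gt j ⟨i, by omega⟩ with h | h
    · left; rw [← hj]; exact htmono.monotone h
    · right; rw [← hj]
      apply htmono.monotone
      rw [Fin.le_def]; rw [Fin.lt_def] at h; simp at h ⊢; omega
  obtain ⟨c₀, hc₀a, hc₀b, hc₀d, hc₀max⟩ := hbump a b haZ hbZ hab hgap0
  have hc₀I : c₀ ∈ Icc (0:ℝ) 1 := ⟨le_trans haZ.1.1 hc₀a.le, le_trans hc₀b.le hbZ.1.2⟩
  set M : ℝ := |u c₀| with hMdef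
  have hM0 : 0 ≤ M := abs_nonneg _
  -- MVT bound on the short bump
  have hmvt : ∀ p q : ℝ, (0:ℝ) ≤ p → q ≤ 1 → p ≤ q → |u q - u p| ≤ K * (q - p) := by
    intro p q hp hq hpq
    have hsub : Icc p q ⊆ Icc (0:ℝ) 1 := Icc_subset_Icc hp hq
    have := (convex_Icc p q).norm_image_sub_le_of_norm_hasDerivWithin_le
      (f := u) (f' := deriv u)
      (fun x hx => ((hdu x (hsub hx)).hasDerivAt.hasDerivWithinAt))
      (fun x hx => by
        rw [Real.norm_eq_abs]; exact hKbound x (hsub hx))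
      (left_mem_Icc.2 hpq) (right_mem_Icc.2 hpq)
    rw [Real.norm_eq_abs, Real.norm_eq_abs, abs_of_nonneg (by linarith : (0:ℝ) ≤ q - p)] at this
    exact this
  have hMbound : 2 * M ≤ K * (b - a) := by
    have h1 : |u c₀ - u a| ≤ K * (c₀ - a) :=
      hmvt a c₀ haZ.1.1 hc₀I.2 hc₀a.le
    have h2 : |u b - u c₀| ≤ K * (b - c₀) :=
      hmvt c₀ b hc₀I.1 hbZ.1.2 hc₀b.le
    rw [hZu a haZ] at h1
    rw [hZu b hbZ] at h2
    have e1 : |u c₀ - 0| = M := by rw [sub_zero]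
    have e2 : |(0:ℝ) - u c₀| = M := by rw [zero_sub, abs_neg]
    rw [e1] at h1; rw [e2] at h2
    linarith
  have hMlt : M < 1 / (2 * n * Real.sqrt (-κ)) := by
    have h2ns : 0 < 2 * (n:ℝ) * Real.sqrt (-κ) := by positivity
    rw [lt_div_iff₀ h2ns]
    have h1 : 2 * M ≤ K * (1/n) := by
      have : K * (b - a) ≤ K * (1/n) := by
        apply mul_le_mul_of_nonneg_left hshort hK0
      linarith
    have h2 : M * (2 * n * Real.sqrt (-κ)) = (2 * M) * n * Real.sqrt (-κ) := by ring
    rw [h2]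
    calc (2 * M) * n * Real.sqrt (-κ)
        ≤ (K * (1/n)) * n * Real.sqrt (-κ) := by
          apply mul_le_mul_of_nonneg_right _ hs.le
          apply mul_le_mul_of_nonneg_right h1 hnR.le
      _ = K * Real.sqrt (-κ) := by field_simp
      _ < 1 := hKlt
  -- global bound |u x| ≤ M
  have hglobal : ∀ x ∈ Icc (0:ℝ) 1, |u x| ≤ M := by
    intro x hx
    by_cases hx0 : u x = 0
    · rw [hx0]; simpa using hM0
    · have hxZ : x ∉ Z := fun h => hx0 (hZu x h)
      -- neighbors
      have hne1 : (sZ.filter (· ≤ x)).Nonempty :=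
        ⟨0, Finset.mem_filter.2 ⟨(hsZmem 0).2 hZ0, hx.1⟩⟩
      have hne2 : (sZ.filter (x ≤ ·)).Nonempty :=
        ⟨1, Finset.mem_filter.2 ⟨(hsZmem 1).2 hZ1, hx.2⟩⟩
      set a' := (sZ.filter (· ≤ x)).max' hne1 with ha'def
      set b' := (sZ.filter (x ≤ ·)).min' hne2 with hb'def
      have ha'mem := Finset.mem_filter.1 ((sZ.filter (· ≤ x)).max'_mem hne1)
      have hb'mem := Finset.mem_filter.1 ((sZ.filter (x ≤ ·)).min'_mem hne2)
      have ha'Z : a' ∈ Z := (hsZmem a').1 ha'mem.1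
      have hb'Z : b' ∈ Z := (hsZmem b').1 hb'mem.1
      have ha'x : a' < x := lt_of_le_of_ne ha'mem.2 (fun h => hxZ (h ▸ ha'Z))
      have hxb' : x < b' := lt_of_le_of_ne hb'mem.2 (fun h => hxZ (h ▸ hb'Z))
      have hgap' : ∀ z ∈ Z, z ≤ a' ∨ b' ≤ z := by
        intro z hz
        rcases le_or_gt z x with h | h
        · left
          exact Finset.le_max' (sZ.filter (· ≤ x)) z
            (Finset.mem_filter.2 ⟨(hsZmem z).2 hz, h⟩)
        · right
          exact Finset.min'_le (sZ.filter (x ≤ ·)) z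
            (Finset.mem_filter.2 ⟨(hsZmem z).2 hz, h.le⟩)
      obtain ⟨c', hc'a, hc'b, hc'd, hc'max⟩ :=
        hbump a' b' ha'Z hb'Z (lt_trans ha'x hxb') hgap'
      have hc'I : c' ∈ Icc (0:ℝ) 1 :=
        ⟨le_trans ha'Z.1.1 hc'a.le, le_trans hc'b.le hb'Z.1.2⟩
      have h1 : |u x| ≤ |u c'| := hc'max x ha'x.le hxb'.le
      have h2 : |u c'| = M := hcritEq c' hc'I c₀ hc₀I hc'd hc₀d
      linarith
  -- conclude
  have hsup : supNorm u ≤ M := by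
    apply csSup_le
    · exact ⟨|u 0|, mem_image_of_mem _ (by simp)⟩
    · rintro y ⟨x, hx, rfl⟩
      exact hglobal x hx
  linarith
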